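/- Let H be a complex Hilbert space and let A, B, W be bounded self-adjoint operators on H with A ≥ 0 and B ≥ 0 (positive operators), and let w ≥ 0 with ‖W‖ ≤ w. Suppose there exists a unit vector Ω ∈ H with A Ω = 0 and B Ω = 0. Let E = inf of the real spectrum of A + B + W, and suppose ψ ∈ H is a unit vector with (A + B + W) ψ = E ψ. Then for every μ > 0 the operator μ·1 + B is invertible in B(H) and re ⟨ψ, (μ·1 + B)⁻¹ ψ⟩ ≥ 1/(μ + 2w). -/

import Mathlib

open scoped InnerProductSpace Pointwise

set_option maxHeartbeats 2000000 in
set_option synthInstance.maxHeartbeats 1000000 in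
/-- The bounded-operator core of Lemma 5.1: if `A, B ≥ 0` have a common unit null vector,
`W` is self-adjoint with `‖W‖ ≤ w`, `E` is the infimum of the real spectrum of `A+B+W`
and `ψ` is a unit eigenvector with eigenvalue `E`, then for every `μ > 0` the operator
`μ·1 + B` is invertible and `re⟨ψ, (μ·1 + B)⁻¹ψ⟩ ≥ 1/(μ + 2w)`. -/
theorem stmt5 {H : Type*} [NormedAddCommGroup H] [InnerProductSpace ℂ H] [CompleteSpace H]
    (A B W : H →L[ℂ] H)
    (hA : IsSelfAdjoint A) (hB : IsSelfAdjoint B) (hW : IsSelfAdjoint W)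
    (hApos : ∀ x : H, 0 ≤ (⟪x, A x⟫_ℂ).re) (hBpos : ∀ x : H, 0 ≤ (⟪x, B x⟫_ℂ).re)
    (w : ℝ) (hw : 0 ≤ w) (hWnorm : ‖W‖ ≤ w)
    (Ω : H) (hΩ : ‖Ω‖ = 1) (hAΩ : A Ω = 0) (hBΩ : B Ω = 0)
    (E : ℝ) (hE : E = sInf {r : ℝ | (r : ℂ) ∈ spectrum ℂ (A + B + W)})
    (ψ : H) (hψ : ‖ψ‖ = 1) (heig : (A + B + W) ψ = (E : ℂ) • ψ) :
    ∀ μ : ℝ, 0 < μ →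
      IsUnit ((μ : ℂ) • (1 : H →L[ℂ] H) + B) ∧
      1 / (μ + 2 * w) ≤ (⟪ψ, Ring.inverse ((μ : ℂ) • (1 : H →L[ℂ] H) + B) ψ⟫_ℂ).re := by
  intro μ hμ
  have hnt : Nontrivial H := ⟨Ω, 0, fun he => by rw [he] at hΩ; simp at hΩ⟩
  -- basic helpers
  have symm : ∀ (T : H →L[ℂ] H), IsSelfAdjoint T → ∀ x y : H, ⟪T x, y⟫_ℂ = ⟪x, T y⟫_ℂ :=
    fun T hT x y => (ContinuousLinearMap.isSelfAdjoint_iff_isSymmetric.mp hT) x y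
  have pos_of : ∀ (T : H →L[ℂ] H), IsSelfAdjoint T → (∀ x, 0 ≤ (⟪x, T x⟫_ℂ).re) →
      (0 : H →L[ℂ] H) ≤ T := by
    intro T hT h
    rw [ContinuousLinearMap.nonneg_iff_isPositive]
    refine ⟨ContinuousLinearMap.isSelfAdjoint_iff_isSymmetric.mp hT, fun x => ?_⟩
    show 0 ≤ RCLike.re ⟪T x, x⟫_ℂ
    rw [inner_re_symm]
    exact h x
  have of_pos : ∀ (T : H →L[ℂ] H), (0 : H →L[ℂ] H) ≤ T → ∀ x, 0 ≤ (⟪x, T x⟫_ℂ).re :=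
    fun T h x => (ContinuousLinearMap.nonneg_iff_isPositive T |>.mp h).re_inner_nonneg_right x
  have hBnn : (0 : H →L[ℂ] H) ≤ B := pos_of B hB hBpos
  -- invertibility of T = μ•1 + B
  have hUnit : IsUnit ((μ : ℂ) • (1 : H →L[ℂ] H) + B) := by
    have h1 : (-μ : ℂ) ∉ spectrum ℂ B := by
      intro hmem
      have h2 : (-μ : ℝ) ∈ spectrum ℝ B := spectrum.of_algebraMap_mem ℂ (by
        simpa [Complex.coe_algebraMap] using hmem)
      have := spectrum_nonneg_of_nonneg hBnn h2
      linarith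
    have h3 := spectrum.notMem_iff.mp h1
    have h4 : -(algebraMap ℂ (H →L[ℂ] H) (-μ) - B) = (μ : ℂ) • (1 : H →L[ℂ] H) + B := by
      rw [Algebra.algebraMap_eq_smul_one]
      push_cast
      rw [neg_smul, neg_sub, sub_neg_eq_add, add_comm]
    exact h4 ▸ h3.neg
  set T : H →L[ℂ] H := (μ : ℂ) • 1 + B with hTdef
  have hTsa : IsSelfAdjoint T := by
    refine IsSelfAdjoint.add ?_ hB
    simp [IsSelfAdjoint, star_smul, Complex.star_def, Complex.conj_ofReal]
  have hTinner : ∀ x : H, (⟪x, T x⟫_ℂ).re = μ * ‖x‖ ^ 2 + (⟪x, B x⟫_ℂ).re := by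
    intro x
    have hx : T x = (μ : ℂ) • x + B x := by rw [hTdef]; rfl
    have h5 : ⟪x, T x⟫_ℂ = (μ : ℂ) * ⟪x, x⟫_ℂ + ⟪x, B x⟫_ℂ := by
      rw [hx, inner_add_right, inner_smul_right]
    have h6 : ⟪x, x⟫_ℂ = ((‖x‖ ^ 2 : ℝ) : ℂ) := by
      rw [inner_self_eq_norm_sq_to_K (𝕜 := ℂ)]
      norm_cast
    rw [h5, h6, ← Complex.ofReal_mul]
    simp
    refine Or.inl ?_
    norm_cast
  have hTpos : (0 : H →L[ℂ] H) ≤ T := by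
    refine pos_of T hTsa fun x => ?_
    rw [hTinner]
    have := hBpos x
    nlinarith [sq_nonneg ‖x‖]
  -- square root of T
  set R : H →L[ℂ] H := CFC.sqrt T with hRdef
  have hRnn : (0 : H →L[ℂ] H) ≤ R := CFC.sqrt_nonneg (a := T)
  have hRsa : IsSelfAdjoint R := IsSelfAdjoint.of_nonneg hRnn
  have hRR : R * R = T := CFC.sqrt_mul_sqrt_self T hTpos
  have key : ∀ u v : H, ⟪u, T v⟫_ℂ = ⟪R u, R v⟫_ℂ := by
    intro u v
    have h6 : T v = R (R v) := by rw [← hRR]; rfl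
    rw [h6, ← symm R hRsa u (R v)]
  -- φ = T⁻¹ ψ
  set φ : H := Ring.inverse T ψ with hφdef
  have hTφ : T φ = ψ := by
    have h7 := Ring.mul_inverse_cancel T hUnit
    calc T φ = (T * Ring.inverse T) ψ := rfl
      _ = ψ := by rw [h7]; rfl
  -- spectrum facts for A + B + W
  have hT0sa : IsSelfAdjoint (A + B + W) := (hA.add hB).add hW
  have hSeq : {r : ℝ | (r : ℂ) ∈ spectrum ℂ (A + B + W)} = spectrum ℝ (A + B + W) := by
    ext r
    rw [Set.mem_setOf_eq, ← spectrum.algebraMap_mem_iff ℂ (R := ℝ)]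
    norm_num [Complex.coe_algebraMap]
  have hbdd : BddBelow (spectrum ℝ (A + B + W)) := by
    refine ⟨-‖A + B + W‖, fun r hr => ?_⟩
    have h8 : ‖algebraMap ℝ ℂ r‖ ≤ ‖A + B + W‖ :=
      spectrum.norm_le_norm_of_mem (spectrum.algebraMap_mem ℂ hr)
    have h9 : |r| ≤ ‖A + B + W‖ := by
      simpa [Complex.coe_algebraMap, Complex.norm_real] using h8
    have := abs_le.mp h9
    linarith [this.1]
  have hEle : ∀ r ∈ spectrum ℝ (A + B + W), E ≤ r := by
    intro r hr
    rw [hE, hSeq]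
    exact csInf_le hbdd hr
  -- A + B + W - E ≥ 0
  have hposE : (0 : H →L[ℂ] H) ≤ (A + B + W) - algebraMap ℝ (H →L[ℂ] H) E := by
    rw [nonneg_iff_isSelfAdjoint_and_quasispectrumRestricts, quasispectrumRestricts_iff_spectrumRestricts]
    refine ⟨hT0sa.sub ((IsSelfAdjoint.all E).algebraMap _), SpectrumRestricts.nnreal_iff.mpr ?_⟩
    intro x hx
    rw [← spectrum.sub_singleton_eq] at hx
    obtain ⟨s, hs, t, ht, rfl⟩ := hx
    rw [Set.mem_singleton_iff] at ht
    subst ht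
    simpa using sub_nonneg.mpr (hEle s hs)
  -- E ≤ w
  have hEw : E ≤ w := by
    have h10 := of_pos _ hposE Ω
    have h11 : ((A + B + W) - algebraMap ℝ (H →L[ℂ] H) E) Ω = W Ω - (E : ℂ) • Ω := by
      rw [Algebra.algebraMap_eq_smul_one]
      simp [ContinuousLinearMap.sub_apply, ContinuousLinearMap.add_apply, hAΩ, hBΩ,
        ContinuousLinearMap.smul_apply, ContinuousLinearMap.one_apply, Complex.coe_smul]
    rw [h11] at h10
    have h12 : ⟪Ω, W Ω - (E : ℂ) • Ω⟫_ℂ = ⟪Ω, W Ω⟫_ℂ - (E : ℂ) * ⟪Ω, Ω⟫_ℂ := by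
      rw [inner_sub_right, inner_smul_right]
    rw [h12, inner_self_eq_norm_sq_to_K (𝕜 := ℂ), hΩ] at h10
    have h13 : (⟪Ω, W Ω⟫_ℂ).re ≤ w := by
      have h14 : (⟪Ω, W Ω⟫_ℂ).re ≤ ‖Ω‖ * ‖W Ω‖ := re_inner_le_norm (𝕜 := ℂ) Ω (W Ω)
      have h15 : ‖W Ω‖ ≤ ‖W‖ * ‖Ω‖ := W.le_opNorm Ω
      rw [hΩ] at h14 h15
      simp at h14 h15
      linarith
    norm_num [Complex.sub_re, Complex.mul_re, Complex.ofReal_re, Complex.ofReal_im] at h10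
    linarith
  -- ⟪ψ, Bψ⟫.re ≤ 2w
  have hb2w : (⟪ψ, B ψ⟫_ℂ).re ≤ 2 * w := by
    have heq : (⟪ψ, (A + B + W) ψ⟫_ℂ).re = E := by
      rw [heig, inner_smul_right, inner_self_eq_norm_sq_to_K (𝕜 := ℂ), hψ]
      push_cast
      simp
    have hsplit : (⟪ψ, (A + B + W) ψ⟫_ℂ).re
        = (⟪ψ, A ψ⟫_ℂ).re + (⟪ψ, B ψ⟫_ℂ).re + (⟪ψ, W ψ⟫_ℂ).re := by
      simp [ContinuousLinearMap.add_apply, inner_add_right]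
    have hWlo : -w ≤ (⟪ψ, W ψ⟫_ℂ).re := by
      have h17 : ‖⟪ψ, W ψ⟫_ℂ‖ ≤ ‖ψ‖ * ‖W ψ‖ := norm_inner_le_norm (𝕜 := ℂ) ψ (W ψ)
      have h18 : ‖W ψ‖ ≤ ‖W‖ * ‖ψ‖ := W.le_opNorm ψ
      rw [hψ] at h17 h18
      simp at h17 h18
      have h19 : |(⟪ψ, W ψ⟫_ℂ).re| ≤ ‖⟪ψ, W ψ⟫_ℂ‖ := Complex.abs_re_le_norm _
      have := abs_le.mp (h19.trans (h17.trans (h18.trans hWnorm)))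
      linarith [this.1]
    have := hApos ψ
    linarith
  -- quantitative bounds on T
  have hTψub : (⟪ψ, T ψ⟫_ℂ).re ≤ μ + 2 * w := by
    rw [hTinner, hψ]
    nlinarith
  have hTψlb : 0 < (⟪ψ, T ψ⟫_ℂ).re := by
    rw [hTinner, hψ]
    have := hBpos ψ
    nlinarith
  -- Cauchy–Schwarz step
  have h1le : (1 : ℝ) ≤ ‖R ψ‖ * ‖R φ‖ := by
    have h20 : (⟪R ψ, R φ⟫_ℂ).re = 1 := by
      rw [← key ψ φ, hTφ, inner_self_eq_norm_sq_to_K (𝕜 := ℂ), hψ]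
      push_cast
      simp
    calc (1 : ℝ) = (⟪R ψ, R φ⟫_ℂ).re := h20.symm
      _ ≤ ‖R ψ‖ * ‖R φ‖ := re_inner_le_norm (𝕜 := ℂ) _ _
  have ha2 : ‖R ψ‖ ^ 2 = (⟪ψ, T ψ⟫_ℂ).re := by
    rw [key ψ ψ]
    exact (inner_self_eq_norm_sq (𝕜 := ℂ) (R ψ)).symm
  have hb2 : ‖R φ‖ ^ 2 = (⟪ψ, φ⟫_ℂ).re := by
    have h21 : ‖R φ‖ ^ 2 = (⟪φ, T φ⟫_ℂ).re := by
      rw [key φ φ]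
      exact (inner_self_eq_norm_sq (𝕜 := ℂ) (R φ)).symm
    rw [h21, hTφ]
    exact inner_re_symm (𝕜 := ℂ) φ ψ
  have hsq : (1 : ℝ) ≤ (⟪ψ, T ψ⟫_ℂ).re * (⟪ψ, φ⟫_ℂ).re := by
    nlinarith [h1le, ha2, hb2, norm_nonneg (R ψ), norm_nonneg (R φ)]
  refine ⟨hUnit, ?_⟩
  have hc : 0 < μ + 2 * w := by linarith
  have hφpos : 0 < (⟪ψ, φ⟫_ℂ).re := by nlinarith
  rw [div_le_iff₀ hc]
  nlinarith
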